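/- Suppose a sequence $\{x^{(n)}\}$ in $\mathbb{R}^n$ satisfies: for each $n$, $x^{(n+1)}$ satisfies all projection cuts $(x^{(k)} - z^{(k)})^\top(x^{(n+1)} - z^{(k)}) \le 0$ for $k \le n$, where $z^{(k)}$ is the Euclidean projection of $x^{(k)}$ onto a nonempty closed convex set $\mathcal{C}$ and $x^{(k)} \notin \mathcal{C}$ for all $k$. Then every limit point of a convergent subsequence of $\{x^{(n)}\}$ lies in $\mathcal{C}$ (hence on the boundary of $\mathcal{C}$, since no iterate is in $\mathcal{C}$). -/

import Mathlib

open Filter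
open scoped RealInnerProductSpace

/-- If each iterate satisfies all previously generated projection cuts, then every
limit point of a convergent subsequence of the iterates lies in `C`. -/
theorem stmt7 (n : ℕ) (C : Set (EuclideanSpace ℝ (Fin n))) (hne : C.Nonempty)
    (hcl : IsClosed C) (hconv : Convex ℝ C)
    (x z : ℕ → EuclideanSpace ℝ (Fin n))
    (hzC : ∀ k, z k ∈ C)
    (hproj : ∀ k, ∀ w ∈ C, ‖x k - z k‖ ≤ ‖x k - w‖)
    (hxnot : ∀ k, x k ∉ C)
    (hcut : ∀ m k : ℕ, k ≤ m → ⟪x k - z k, x (m + 1) - z k⟫ ≤ 0)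
    (φ : ℕ → ℕ) (hφ : StrictMono φ) (p : EuclideanSpace ℝ (Fin n))
    (hlim : Tendsto (x ∘ φ) atTop (nhds p)) :
    p ∈ C := by
  have key : ∀ i : ℕ, ‖x (φ i) - z (φ i)‖ ≤ ‖x (φ i) - x (φ (i+1))‖ := by
    intro i
    have hlt : φ i < φ (i+1) := hφ (Nat.lt_succ_self i)
    have hm : φ i ≤ φ (i+1) - 1 := by omega
    have hφ1 : φ (i+1) - 1 + 1 = φ (i+1) := by omega
    have hcut' := hcut (φ (i+1) - 1) (φ i) hm
    rw [hφ1] at hcut'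
    set u := x (φ i) - z (φ i) with hu
    have h1 : ‖u‖ ^ 2 = ⟪u, u⟫ := by
      rw [real_inner_self_eq_norm_sq]
    have h2 : ⟪u, u⟫ = ⟪u, x (φ i) - x (φ (i+1))⟫ + ⟪u, x (φ (i+1)) - z (φ i)⟫ := by
      rw [← inner_add_right]
      congr 1
      rw [hu]
      abel
    have h3 : ⟪u, x (φ i) - x (φ (i+1))⟫ ≤ ‖u‖ * ‖x (φ i) - x (φ (i+1))‖ :=
      real_inner_le_norm _ _
    nlinarith [norm_nonneg u, norm_nonneg (x (φ i) - x (φ (i+1)))]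
  have hlim2 : Tendsto (fun i => x (φ (i+1))) atTop (nhds p) :=
    hlim.comp (tendsto_add_atTop_nat 1)
  have hdiff : Tendsto (fun i => ‖x (φ i) - x (φ (i+1))‖) atTop (nhds 0) := by
    have := (hlim.sub hlim2).norm
    simpa using this
  have hnorm0 : Tendsto (fun i => ‖x (φ i) - z (φ i)‖) atTop (nhds 0) :=
    squeeze_zero (fun i => norm_nonneg _) key hdiff
  have hvec0 : Tendsto (fun i => x (φ i) - z (φ i)) atTop (nhds 0) :=
    tendsto_zero_iff_norm_tendsto_zero.mpr hnorm0
  have hz : Tendsto (fun i => z (φ i)) atTop (nhds p) := by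
    have := hlim.sub hvec0
    simpa using this
  exact hcl.mem_of_tendsto hz (Eventually.of_forall fun i => hzC (φ i))
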